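/- Let S ⊂ ℝ² be compact, I ⊂ S a unisolvent finite set of n points for P_m, Λ the norming constant, and R the least-squares reconstruction operator. Then for every continuous g on S, ‖g − R g‖_{L∞(S)} ≤ (1 + Λ√n) · inf_{p∈P_m} ‖g − p‖_{L∞(S)} (quasi-optimal approximation). -/
import Mathlib


open Metric Set

noncomputable def supNorm (g : EuclideanSpace ℝ (Fin 2) → ℝ)
    (S : Set (EuclideanSpace ℝ (Fin 2))) : ℝ :=
  sSup ((fun x => |g x|) '' S)

noncomputable def pEval (p : MvPolynomial (Fin 2) ℝ) (x : EuclideanSpace ℝ (Fin 2)) : ℝ :=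
  MvPolynomial.eval (fun i => x i) p

noncomputable def lsq (I : Finset (EuclideanSpace ℝ (Fin 2)))
    (g : EuclideanSpace ℝ (Fin 2) → ℝ) (p : MvPolynomial (Fin 2) ℝ) : ℝ :=
  ∑ x ∈ I, (g x - pEval p x) ^ 2

lemma pEval_continuous (p : MvPolynomial (Fin 2) ℝ) : Continuous (pEval p) := by
  have h : pEval p = (fun y : Fin 2 → ℝ => MvPolynomial.eval y p) ∘
      (fun x : EuclideanSpace ℝ (Fin 2) => fun i => x i) := rfl
  rw [h]
  exact Continuous.comp (MvPolynomial.continuous_eval p)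
    (continuous_pi fun i => (EuclideanSpace.proj i : EuclideanSpace ℝ (Fin 2) →L[ℝ] ℝ).continuous)

/-- Quasi-optimal L∞ approximation of the least-squares reconstruction:
‖g − R g‖_{L∞(S)} ≤ (1 + Λ√n)·inf_{q∈P_m}‖g − q‖_{L∞(S)}. -/
theorem stmt10
    (S : Set (EuclideanSpace ℝ (Fin 2))) (hS : IsCompact S)
    (I : Finset (EuclideanSpace ℝ (Fin 2))) (hI : I.Nonempty) (hIS : ↑I ⊆ S) (m : ℕ)
    (huni : ∀ p : MvPolynomial (Fin 2) ℝ, p.totalDegree ≤ m →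
      (∀ y ∈ I, pEval p y = 0) → ∀ x ∈ S, pEval p x = 0)
    (Λ : ℝ)
    (hΛ : ∀ p : MvPolynomial (Fin 2) ℝ, p.totalDegree ≤ m →
      supNorm (pEval p) S ≤ Λ * I.sup' hI (fun x => |pEval p x|))
    (g : EuclideanSpace ℝ (Fin 2) → ℝ) (hg : ContinuousOn g S)
    (p : MvPolynomial (Fin 2) ℝ) (hp : p.totalDegree ≤ m)
    (hmin : ∀ q : MvPolynomial (Fin 2) ℝ, q.totalDegree ≤ m → lsq I g p ≤ lsq I g q) :
    ∀ q : MvPolynomial (Fin 2) ℝ, q.totalDegree ≤ m →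
      supNorm (fun x => g x - pEval p x) S ≤
        (1 + Λ * Real.sqrt I.card) * supNorm (fun x => g x - pEval q x) S := by
  intro q hq
  obtain ⟨x0, hx0⟩ := hI
  have hSne : S.Nonempty := ⟨x0, hIS hx0⟩
  set M := supNorm (fun x => g x - pEval q x) S with hMdef
  have hbdd : ∀ f : EuclideanSpace ℝ (Fin 2) → ℝ, ContinuousOn f S →
      BddAbove ((fun x => |f x|) '' S) := fun f hf =>
    (hS.image_of_continuousOn hf.abs).bddAbove
  have hgq : ContinuousOn (fun x => g x - pEval q x) S :=
    hg.sub (pEval_continuous q).continuousOn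
  have hMle : ∀ x ∈ S, |g x - pEval q x| ≤ M := fun x hx =>
    le_csSup (hbdd _ hgq) ⟨x, hx, rfl⟩
  have hM0 : 0 ≤ M := le_trans (abs_nonneg _) (hMle x0 (hIS hx0))
  -- degree of p - q
  have hdeg : (p - q).totalDegree ≤ m := by
    rw [sub_eq_add_neg]
    exact le_trans (MvPolynomial.totalDegree_add _ _)
      (max_le hp (by rw [MvPolynomial.totalDegree_neg]; exact hq))
  -- orthogonality of the residual
  have horth : ∀ r : MvPolynomial (Fin 2) ℝ, r.totalDegree ≤ m →
      ∑ x ∈ I, (g x - pEval p x) * pEval r x = 0 := by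
    intro r hr
    set b := ∑ x ∈ I, (g x - pEval p x) * pEval r x with hb
    set a := ∑ x ∈ I, (pEval r x) ^ 2 with ha
    have ha0 : 0 ≤ a := Finset.sum_nonneg fun _ _ => sq_nonneg _
    have key : ∀ t : ℝ, 0 ≤ t ^ 2 * a - 2 * t * b := by
      intro t
      have h1 : (p + t • r).totalDegree ≤ m :=
        le_trans (MvPolynomial.totalDegree_add _ _)
          (max_le hp (le_trans (MvPolynomial.totalDegree_smul_le _ _) hr))
      have h2 := hmin _ h1
      have h3 : lsq I g (p + t • r) = lsq I g p + (t ^ 2 * a - 2 * t * b) := by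
        simp only [lsq, hb, ha, Finset.mul_sum, Finset.sum_mul, ← Finset.sum_add_distrib,
          ← Finset.sum_sub_distrib]
        refine Finset.sum_congr rfl fun x hx => ?_
        simp only [pEval, map_add, MvPolynomial.smul_eval]
        ring
      linarith [h2, h3 ▸ h2]
    have ha1 : (0:ℝ) < a + 1 := by linarith
    have ht : (b / (a + 1)) * (a + 1) = b := div_mul_cancel₀ _ (ne_of_gt ha1)
    set t := b / (a + 1) with htdef
    have h4 : 0 ≤ t ^ 2 * a - 2 * t * b := key t
    rw [← ht] at h4
    have ht2 : t ^ 2 ≤ 0 := by nlinarith [sq_nonneg t]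
    have ht0 : t = 0 := by
      have := le_antisymm ht2 (sq_nonneg t)
      exact (pow_eq_zero_iff two_ne_zero).mp this
    rw [← ht, ht0, zero_mul]
  -- Pythagoras: ∑ (p-q)² ≤ ∑ (g-q)² on I
  have hpq : ∑ x ∈ I, (pEval (p - q) x) ^ 2 ≤ ∑ x ∈ I, (g x - pEval q x) ^ 2 := by
    have horth' := horth (p - q) hdeg
    have expand : ∑ x ∈ I, (g x - pEval q x) ^ 2 =
        ∑ x ∈ I, (g x - pEval p x) ^ 2 +
          2 * (∑ x ∈ I, (g x - pEval p x) * pEval (p - q) x) +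
          ∑ x ∈ I, (pEval (p - q) x) ^ 2 := by
      rw [Finset.mul_sum, ← Finset.sum_add_distrib, ← Finset.sum_add_distrib]
      refine Finset.sum_congr rfl fun x hx => ?_
      simp only [pEval, map_sub]
      ring
    have hnn : 0 ≤ ∑ x ∈ I, (g x - pEval p x) ^ 2 :=
      Finset.sum_nonneg fun _ _ => sq_nonneg _
    rw [expand, horth']
    linarith
  -- ∑ (g-q)² on I ≤ n M²
  have hsum : ∑ x ∈ I, (g x - pEval q x) ^ 2 ≤ I.card * M ^ 2 := by
    have : ∀ x ∈ I, (g x - pEval q x) ^ 2 ≤ M ^ 2 := by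
      intro x hx
      calc (g x - pEval q x) ^ 2 = |g x - pEval q x| ^ 2 := (sq_abs _).symm
        _ ≤ M ^ 2 := pow_le_pow_left₀ (abs_nonneg _) (hMle x (hIS hx)) 2
    calc ∑ x ∈ I, (g x - pEval q x) ^ 2 ≤ ∑ _x ∈ I, M ^ 2 := Finset.sum_le_sum this
      _ = I.card * M ^ 2 := by rw [Finset.sum_const, nsmul_eq_mul]
  -- bound on the discrete sup of p - q
  have hsup' : I.sup' ⟨x0, hx0⟩ (fun x => |pEval (p - q) x|) ≤ Real.sqrt I.card * M := by
    apply Finset.sup'_le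
    intro x hx
    have h1 : (pEval (p - q) x) ^ 2 ≤ I.card * M ^ 2 :=
      le_trans (Finset.single_le_sum (fun i _ => sq_nonneg (pEval (p - q) i)) hx)
        (le_trans hpq hsum)
    have h2 : |pEval (p - q) x| ≤ Real.sqrt (I.card * M ^ 2) := by
      rw [← Real.sqrt_sq_eq_abs]
      exact Real.sqrt_le_sqrt h1
    calc |pEval (p - q) x| ≤ Real.sqrt (I.card * M ^ 2) := h2
      _ = Real.sqrt I.card * M := by
        rw [Real.sqrt_mul (by positivity), Real.sqrt_sq hM0]
  -- Λ is nonnegative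
  have hΛ0 : 0 ≤ Λ := by
    have h1 := hΛ 1 (by simp)
    have hconst : (fun x => |pEval (1 : MvPolynomial (Fin 2) ℝ) x|) = fun _ => (1:ℝ) := by
      funext x; simp [pEval]
    have himg : supNorm (pEval (1 : MvPolynomial (Fin 2) ℝ)) S = 1 := by
      unfold supNorm
      rw [hconst, Set.Nonempty.image_const hSne]
      exact csSup_singleton 1
    have hsupc : (I.sup' ⟨x0, hx0⟩ fun x => |pEval (1 : MvPolynomial (Fin 2) ℝ) x|) = 1 := by
      rw [show (fun x : EuclideanSpace ℝ (Fin 2) => |pEval (1 : MvPolynomial (Fin 2) ℝ) x|) =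
        fun _ => (1:ℝ) from hconst]
      exact Finset.sup'_const _ _
    rw [himg, hsupc, mul_one] at h1
    linarith
  -- sup over S of |p - q|
  have hPQ : supNorm (pEval (p - q)) S ≤ Λ * (Real.sqrt I.card * M) :=
    le_trans (hΛ _ hdeg) (mul_le_mul_of_nonneg_left hsup' hΛ0)
  -- conclusion
  unfold supNorm
  apply csSup_le (hSne.image _)
  rintro y ⟨x, hx, rfl⟩
  have hsplit : g x - pEval p x = (g x - pEval q x) - pEval (p - q) x := by
    simp only [pEval, map_sub]; ring
  have h1 : |g x - pEval p x| ≤ |g x - pEval q x| + |pEval (p - q) x| := by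
    rw [hsplit, sub_eq_add_neg]
    exact le_trans (abs_add_le _ _) (by rw [abs_neg])
  have h2 : |pEval (p - q) x| ≤ supNorm (pEval (p - q)) S :=
    le_csSup (hbdd _ (pEval_continuous _).continuousOn) ⟨x, hx, rfl⟩
  have h3 := hMle x hx
  have hring : (1 + Λ * Real.sqrt I.card) * M = M + Λ * (Real.sqrt I.card * M) := by ring
  rw [hring]
  linarith
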